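/- Let (S, ⋆) be a finite fusion rule and let n, m be positive integers. Then there exists a commutative nonassociative F-algebra U equipped with m (S,⋆)-decompositions (U_s^j)_{s∈S} (j = 1,…,m) and elements u₁,…,u_n, such that U is the smallest subalgebra of U containing u₁,…,u_n and invariant under every projection pr_s^j, and with the following universal property: for every commutative nonassociative F-algebra N equipped with m (S,⋆)-decompositions (N_s^j)_{s∈S} (j = 1,…,m) and elements y₁,…,y_n such that N is the smallest subalgebra of N containing y₁,…,y_n and invariant under all its projections, there exists a unique F-algebra homomorphism φ : U → N with φ(u_i) = y_i for all i = 1,…,n and φ(U_s^j) ⊆ N_s^j for all s ∈ S and j = 1,…,m; moreover this φ is surjective. -/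

import Mathlib

/-- A commutative nonassociative algebra over the field `F`, bundled with its structure. -/
structure CommNAAlg (F : Type) [Field F] where
  carrier : Type
  [ring : NonUnitalNonAssocCommRing carrier]
  [mod : Module F carrier]
  [scc : SMulCommClass F carrier carrier]
  [ist : IsScalarTower F carrier carrier]

attribute [instance] CommNAAlg.ring CommNAAlg.mod CommNAAlg.scc CommNAAlg.ist

/-- An `(S,⋆)`-decomposition of `M`: a direct sum decomposition `M = ⊕_{s ∈ S} M_s`
(recorded together with its projections `pr_s`) satisfying the fusion rule `⋆`. -/
structure Decomposition (F : Type) [Field F] (M : Type) [NonUnitalNonAssocCommRing M]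
    [Module F M] (S : Type) [Fintype S] (star : S → S → Set S) where
  comp : S → Submodule F M
  proj : S → M →ₗ[F] M
  proj_mem : ∀ s x, proj s x ∈ comp s
  proj_eq_self : ∀ s, ∀ x ∈ comp s, proj s x = x
  proj_eq_zero : ∀ s t, s ≠ t → ∀ x ∈ comp t, proj s x = 0
  sum_proj : ∀ x, ∑ s, proj s x = x
  fusion : ∀ s t, ∀ x ∈ comp s, ∀ y ∈ comp t, x * y ∈ ⨆ u ∈ star s t, comp u

/-- `M` is generated by `X` as a decomposition algebra (w.r.t. the family of
decompositions `D`): the smallest subalgebra containing `X` and invariant under all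
the projections of all the decompositions is `M` itself. -/
def GensDecompAlg {F : Type} [Field F] {M : Type} [NonUnitalNonAssocCommRing M]
    [Module F M] {S : Type} [Fintype S] {star : S → S → Set S} {J : Type}
    (D : J → Decomposition F M S star) (X : Set M) : Prop :=
  ∀ A : NonUnitalSubalgebra F M, X ⊆ ↑A →
    (∀ j s, ∀ x ∈ A, (D j).proj s x ∈ A) → ∀ x : M, x ∈ A

namespace UDA

/-- Formal terms: generators, products, projections. -/
inductive Term (S : Type) (n m : ℕ) : Type
  | gen : Fin n → Term S n m
  | mul : Term S n m → Term S n m → Term S n m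
  | pr : Fin m → S → Term S n m → Term S n m

variable (F : Type) [Field F] (S : Type) [Fintype S] (star : S → S → Set S) (n m : ℕ)

/-- The free vector space on terms. -/
abbrev V : Type := Term S n m →₀ F

/-- Evaluation of a term in a decomposition algebra. -/
noncomputable def evalT (N : CommNAAlg F) (E : Fin m → Decomposition F N.carrier S star)
    (y : Fin n → N.carrier) : Term S n m → N.carrier
  | .gen i => y i
  | .mul a b => evalT N E y a * evalT N E y b
  | .pr j s t => (E j).proj s (evalT N E y t)

/-- Linear evaluation map. -/
noncomputable def ev (N : CommNAAlg F) (E : Fin m → Decomposition F N.carrier S star)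
    (y : Fin n → N.carrier) : V F S n m →ₗ[F] N.carrier :=
  Finsupp.lift N.carrier F (Term S n m) (evalT F S star n m N E y)

/-- Formal multiplication on `V`. -/
noncomputable def mulV : V F S n m →ₗ[F] V F S n m →ₗ[F] V F S n m :=
  Finsupp.lift (V F S n m →ₗ[F] V F S n m) F (Term S n m)
    (fun t₁ => Finsupp.lift (V F S n m) F (Term S n m)
      (fun t₂ => Finsupp.single (Term.mul t₁ t₂) (1 : F)))

/-- Formal projections on `V`. -/
noncomputable def Pr (j : Fin m) (s : S) : V F S n m →ₗ[F] V F S n m :=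
  Finsupp.lsum F (fun t => Finsupp.lsingle (Term.pr j s t))

@[simp] lemma Pr_single (j : Fin m) (s : S) (t : Term S n m) (c : F) :
    Pr F S n m j s (Finsupp.single t c) = Finsupp.single (Term.pr j s t) c := by
  simp [Pr]

@[simp] lemma mulV_single (t₁ t₂ : Term S n m) (c d : F) :
    mulV F S n m (Finsupp.single t₁ c) (Finsupp.single t₂ d)
      = Finsupp.single (Term.mul t₁ t₂) (c * d) := by
  simp [mulV, Finsupp.lift_apply, Finsupp.sum_single_index, Finsupp.smul_single,
    smul_eq_mul, mul_comm]

@[simp] lemma ev_single (N : CommNAAlg F) (E : Fin m → Decomposition F N.carrier S star)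
    (y : Fin n → N.carrier) (t : Term S n m) (c : F) :
    ev F S star n m N E y (Finsupp.single t c) = c • evalT F S star n m N E y t := by
  simp [ev, Finsupp.lift_apply, Finsupp.sum_single_index]

lemma ev_mulV (N : CommNAAlg F) (E : Fin m → Decomposition F N.carrier S star)
    (y : Fin n → N.carrier) (a b : V F S n m) :
    ev F S star n m N E y (mulV F S n m a b)
      = ev F S star n m N E y a * ev F S star n m N E y b := by
  induction a using Finsupp.induction_linear with
  | zero => simp
  | add f g hf hg => simp [hf, hg, add_mul]
  | single t c =>
    induction b using Finsupp.induction_linear with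
    | zero => simp
    | add f g hf hg => simp [hf, hg, mul_add]
    | single t' c' =>
      simp only [mulV_single, ev_single, evalT]
      rw [smul_mul_assoc, mul_smul_comm, ← smul_assoc, smul_eq_mul]

lemma ev_Pr (N : CommNAAlg F) (E : Fin m → Decomposition F N.carrier S star)
    (y : Fin n → N.carrier) (j : Fin m) (s : S) (a : V F S n m) :
    ev F S star n m N E y (Pr F S n m j s a)
      = (E j).proj s (ev F S star n m N E y a) := by
  induction a using Finsupp.induction_linear with
  | zero => simp
  | add f g hf hg => simp [hf, hg]
  | single t c => simp [evalT]

/-- The ideal of universal relations. -/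
noncomputable def I : Submodule F (V F S n m) :=
  ⨅ p : Σ' (N : CommNAAlg F) (_ : Fin m → Decomposition F N.carrier S star),
      (Fin n → N.carrier),
    LinearMap.ker (ev F S star n m p.1 p.2.1 p.2.2)

lemma mem_I_iff (x : V F S n m) :
    x ∈ I F S star n m ↔ ∀ (N : CommNAAlg F) (E : Fin m → Decomposition F N.carrier S star)
      (y : Fin n → N.carrier), ev F S star n m N E y x = 0 := by
  constructor
  · intro hx N E y
    exact Submodule.mem_iInf _ |>.mp hx ⟨N, E, y⟩
  · intro h
    exact Submodule.mem_iInf _ |>.mpr fun p => h p.1 p.2.1 p.2.2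

/-- The universal algebra. -/
def Ualg : Type := V F S n m ⧸ I F S star n m

noncomputable instance : AddCommGroup (Ualg F S star n m) :=
  inferInstanceAs (AddCommGroup (V F S n m ⧸ I F S star n m))

noncomputable instance : Module F (Ualg F S star n m) :=
  inferInstanceAs (Module F (V F S n m ⧸ I F S star n m))

/-- Quotient map. -/
noncomputable def mk : V F S n m →ₗ[F] Ualg F S star n m := (I F S star n m).mkQ

lemma mk_surjective : Function.Surjective (mk F S star n m) :=
  Submodule.mkQ_surjective _

lemma mulV_mem_I_left (a : V F S n m) {b : V F S n m} (hb : b ∈ I F S star n m) :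
    mulV F S n m a b ∈ I F S star n m := by
  rw [mem_I_iff] at hb ⊢
  intro N E y
  rw [ev_mulV, hb N E y, mul_zero]

lemma mulV_mem_I_right {a : V F S n m} (ha : a ∈ I F S star n m) (b : V F S n m) :
    mulV F S n m a b ∈ I F S star n m := by
  rw [mem_I_iff] at ha ⊢
  intro N E y
  rw [ev_mulV, ha N E y, zero_mul]

/-- Multiplication, partially descended. -/
noncomputable def mulU' : V F S n m →ₗ[F] Ualg F S star n m →ₗ[F] Ualg F S star n m where
  toFun a := Submodule.liftQ (I F S star n m) ((mk F S star n m).comp (mulV F S n m a))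
    (by intro b hb
        rw [LinearMap.mem_ker, LinearMap.comp_apply]
        exact (Submodule.Quotient.mk_eq_zero _).mpr (mulV_mem_I_left F S star n m a hb))
  map_add' a b := by
    apply Submodule.linearMap_qext
    ext v
    simp [Submodule.liftQ_apply]
    rfl
  map_smul' c a := by
    apply Submodule.linearMap_qext
    ext v
    simp [Submodule.liftQ_apply]
    rfl

/-- Multiplication on the universal algebra. -/
noncomputable def mulU : Ualg F S star n m →ₗ[F] Ualg F S star n m →ₗ[F] Ualg F S star n m :=
  Submodule.liftQ (I F S star n m) (mulU' F S star n m)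
    (by intro a ha
        rw [LinearMap.mem_ker]
        apply Submodule.linearMap_qext
        refine LinearMap.ext fun v => ?_
        show (mk F S star n m) (mulV F S n m a v) = 0
        exact (Submodule.Quotient.mk_eq_zero _).mpr (mulV_mem_I_right F S star n m ha v))

noncomputable instance : Mul (Ualg F S star n m) := ⟨fun x y => mulU F S star n m x y⟩

@[simp] lemma mk_apply (a : V F S n m) :
    mk F S star n m a = Submodule.Quotient.mk a := rfl

lemma mk_mul (a b : V F S n m) :
    mk F S star n m a * mk F S star n m b = mk F S star n m (mulV F S n m a b) := by
  rfl

lemma mk_eq_mk_iff (a b : V F S n m) :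
    mk F S star n m a = mk F S star n m b ↔ a - b ∈ I F S star n m := by
  rw [mk_apply, mk_apply]; exact Submodule.Quotient.eq _

lemma mk_eq_zero_iff (a : V F S n m) :
    mk F S star n m a = 0 ↔ a ∈ I F S star n m := by
  rw [mk_apply]; exact Submodule.Quotient.mk_eq_zero _

noncomputable instance : NonUnitalNonAssocCommRing (Ualg F S star n m) :=
  { (inferInstance : AddCommGroup (Ualg F S star n m)) with
    mul := fun x y => mulU F S star n m x y
    left_distrib := fun x y z => map_add (mulU F S star n m x) y z
    right_distrib := fun x y z => by
      show mulU F S star n m (x + y) z = mulU F S star n m x z + mulU F S star n m y z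
      rw [map_add]; rfl
    zero_mul := fun x => by
      show mulU F S star n m 0 x = 0
      rw [map_zero]; rfl
    mul_zero := fun x => map_zero (mulU F S star n m x)
    mul_comm := fun x y => by
      obtain ⟨a, rfl⟩ := mk_surjective F S star n m x
      obtain ⟨b, rfl⟩ := mk_surjective F S star n m y
      show mk F S star n m a * mk F S star n m b = mk F S star n m b * mk F S star n m a
      rw [mk_mul, mk_mul, mk_eq_mk_iff, mem_I_iff]
      intro N E y
      rw [map_sub, ev_mulV, ev_mulV, mul_comm, sub_self] }

instance : SMulCommClass F (Ualg F S star n m) (Ualg F S star n m) where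
  smul_comm c x y := by
    show c • (mulU F S star n m x y) = mulU F S star n m x (c • y)
    rw [map_smul]

instance : IsScalarTower F (Ualg F S star n m) (Ualg F S star n m) where
  smul_assoc c x y := by
    show mulU F S star n m (c • x) y = c • mulU F S star n m x y
    rw [map_smul]; rfl

lemma Pr_mem_I {a : V F S n m} (ha : a ∈ I F S star n m) (j : Fin m) (s : S) :
    Pr F S n m j s a ∈ I F S star n m := by
  rw [mem_I_iff] at ha ⊢
  intro N E y
  rw [ev_Pr, ha N E y, map_zero]

/-- Projections on the universal algebra. -/
noncomputable def Qr (j : Fin m) (s : S) : Ualg F S star n m →ₗ[F] Ualg F S star n m :=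
  Submodule.mapQ (I F S star n m) (I F S star n m) (Pr F S n m j s)
    (fun a ha => Pr_mem_I F S star n m ha j s)

lemma Qr_mk (j : Fin m) (s : S) (a : V F S n m) :
    Qr F S star n m j s (mk F S star n m a) = mk F S star n m (Pr F S n m j s a) := rfl

lemma sum_Qr (j : Fin m) (x : Ualg F S star n m) :
    ∑ s, Qr F S star n m j s x = x := by
  obtain ⟨a, rfl⟩ := mk_surjective F S star n m x
  simp only [Qr_mk]
  rw [← map_sum (mk F S star n m)]
  rw [mk_eq_mk_iff, mem_I_iff]
  intro N E y
  rw [map_sub, map_sum]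
  simp only [ev_Pr]
  rw [(E j).sum_proj (ev F S star n m N E y a), sub_self]

lemma Qr_Qr_same (j : Fin m) (s : S) (x : Ualg F S star n m) :
    Qr F S star n m j s (Qr F S star n m j s x) = Qr F S star n m j s x := by
  obtain ⟨a, rfl⟩ := mk_surjective F S star n m x
  simp only [Qr_mk]
  rw [mk_eq_mk_iff, mem_I_iff]
  intro N E y
  rw [map_sub]
  simp only [ev_Pr]
  rw [(E j).proj_eq_self s _ ((E j).proj_mem s _), sub_self]

lemma Qr_Qr_ne (j : Fin m) (s t : S) (hst : s ≠ t) (x : Ualg F S star n m) :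
    Qr F S star n m j s (Qr F S star n m j t x) = 0 := by
  obtain ⟨a, rfl⟩ := mk_surjective F S star n m x
  simp only [Qr_mk]
  rw [mk_eq_zero_iff, mem_I_iff]
  intro N E y
  simp only [ev_Pr]
  rw [(E j).proj_eq_zero s t hst _ ((E j).proj_mem t _)]

/-- The projection of a decomposition kills any sup of foreign components. -/
lemma proj_biSup_eq_zero {M : Type} [NonUnitalNonAssocCommRing M] [Module F M]
    (E : Decomposition F M S star) (A : Set S) (u : S) (hu : u ∉ A) {x : M}
    (hx : x ∈ ⨆ v ∈ A, E.comp v) : E.proj u x = 0 := by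
  rw [iSup_subtype'] at hx
  refine Submodule.iSup_induction (motive := fun z => E.proj u z = 0) _ hx
    (fun v w hw => E.proj_eq_zero u v (fun h => hu (h ▸ v.2)) w hw)
    (map_zero _) (fun a b ha hb => by
      show E.proj u (a + b) = 0
      rw [map_add, ha, hb, add_zero])

/-- The decompositions of the universal algebra. -/
noncomputable def DU (j : Fin m) : Decomposition F (Ualg F S star n m) S star where
  comp s := LinearMap.range (Qr F S star n m j s)
  proj s := Qr F S star n m j s
  proj_mem s x := LinearMap.mem_range_self _ x
  proj_eq_self s x hx := by
    obtain ⟨y, rfl⟩ := hx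
    exact Qr_Qr_same F S star n m j s y
  proj_eq_zero s t hst x hx := by
    obtain ⟨y, rfl⟩ := hx
    exact Qr_Qr_ne F S star n m j s t hst y
  sum_proj x := sum_Qr F S star n m j x
  fusion s t x hx y hy := by
    obtain ⟨x', rfl⟩ := hx
    obtain ⟨y', rfl⟩ := hy
    set z := Qr F S star n m j s x' * Qr F S star n m j t y' with hz
    rw [← sum_Qr F S star n m j z]
    refine Submodule.sum_mem _ fun u _ => ?_
    by_cases hu : u ∈ star s t
    · exact Submodule.mem_iSup_of_mem u (Submodule.mem_iSup_of_mem hu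
        (LinearMap.mem_range_self _ z))
    · have hzero : Qr F S star n m j u z = 0 := by
        obtain ⟨a, rfl⟩ := mk_surjective F S star n m x'
        obtain ⟨b, rfl⟩ := mk_surjective F S star n m y'
        rw [hz, Qr_mk, Qr_mk, mk_mul, Qr_mk, mk_eq_zero_iff, mem_I_iff]
        intro N E yy
        rw [ev_Pr, ev_mulV, ev_Pr, ev_Pr]
        exact proj_biSup_eq_zero F S star (E j) (star s t) u hu
          ((E j).fusion s t _ ((E j).proj_mem s _) _ ((E j).proj_mem t _))
      rw [hzero]
      exact Submodule.zero_mem _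

/-- Generators of the universal algebra. -/
noncomputable def uU (i : Fin n) : Ualg F S star n m :=
  mk F S star n m (Finsupp.single (Term.gen i) 1)

lemma gensU : GensDecompAlg (DU F S star n m) (Set.range (uU F S star n m)) := by
  intro A hX hproj x
  obtain ⟨v, rfl⟩ := mk_surjective F S star n m x
  have key : ∀ t : Term S n m, mk F S star n m (Finsupp.single t 1) ∈ A := by
    intro t
    induction t with
    | gen i => exact hX ⟨i, rfl⟩
    | mul t₁ t₂ ih₁ ih₂ =>
      have : mk F S star n m (Finsupp.single (Term.mul t₁ t₂) 1)
          = mk F S star n m (Finsupp.single t₁ 1) * mk F S star n m (Finsupp.single t₂ 1) := by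
        rw [mk_mul, mulV_single, one_mul]
      rw [this]
      exact mul_mem ih₁ ih₂
    | pr j s t ih =>
      have : mk F S star n m (Finsupp.single (Term.pr j s t) 1)
          = Qr F S star n m j s (mk F S star n m (Finsupp.single t 1)) := by
        rw [Qr_mk, Pr_single]
      rw [this]
      exact hproj j s _ ih
  induction v using Finsupp.induction_linear with
  | zero => rw [map_zero]; exact zero_mem A
  | add f g hf hg => rw [map_add]; exact add_mem hf hg
  | single t c =>
    have : (Finsupp.single t c : V F S n m) = c • Finsupp.single t 1 := by
      rw [Finsupp.smul_single, smul_eq_mul, mul_one]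
    rw [this, map_smul]
    exact SMulMemClass.smul_mem c (key t)

/-- The universal algebra, bundled. -/
noncomputable def Ubundled : CommNAAlg F := ⟨Ualg F S star n m⟩

/-- The canonical evaluation homomorphism out of the universal algebra. -/
noncomputable def evU (N : CommNAAlg F) (E : Fin m → Decomposition F N.carrier S star)
    (y : Fin n → N.carrier) : Ualg F S star n m →ₗ[F] N.carrier :=
  Submodule.liftQ (I F S star n m) (ev F S star n m N E y)
    (iInf_le (fun p : Σ' (N : CommNAAlg F)
        (_ : Fin m → Decomposition F N.carrier S star), (Fin n → N.carrier) =>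
      LinearMap.ker (ev F S star n m p.1 p.2.1 p.2.2)) ⟨N, E, y⟩)

lemma evU_mk (N : CommNAAlg F) (E : Fin m → Decomposition F N.carrier S star)
    (y : Fin n → N.carrier) (a : V F S n m) :
    evU F S star n m N E y (mk F S star n m a) = ev F S star n m N E y a := rfl

/-- The evaluation as a non-unital algebra homomorphism. -/
noncomputable def φ0 (N : CommNAAlg F) (E : Fin m → Decomposition F N.carrier S star)
    (y : Fin n → N.carrier) : Ualg F S star n m →ₙₐ[F] N.carrier :=
  { evU F S star n m N E y with
    map_mul' := by
      intro x z
      obtain ⟨a, rfl⟩ := mk_surjective F S star n m x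
      obtain ⟨b, rfl⟩ := mk_surjective F S star n m z
      show evU F S star n m N E y (mk F S star n m a * mk F S star n m b) = _
      rw [mk_mul, evU_mk, ev_mulV]
      rfl
    map_zero' := map_zero _ }

lemma φ0_apply (N : CommNAAlg F) (E : Fin m → Decomposition F N.carrier S star)
    (y : Fin n → N.carrier) (x : Ualg F S star n m) :
    φ0 F S star n m N E y x = evU F S star n m N E y x := rfl

/-- Any compatible hom intertwines the projections. -/
lemma proj_comm (N : CommNAAlg F) (E : Fin m → Decomposition F N.carrier S star)
    (φ : Ualg F S star n m →ₙₐ[F] N.carrier)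
    (hφ : ∀ j s, ∀ x ∈ (DU F S star n m j).comp s, φ x ∈ (E j).comp s)
    (j : Fin m) (s : S) (x : Ualg F S star n m) :
    φ (Qr F S star n m j s x) = (E j).proj s (φ x) := by
  conv_rhs => rw [← sum_Qr F S star n m j x]
  rw [map_sum, map_sum]
  rw [Finset.sum_eq_single s]
  · exact ((E j).proj_eq_self s _ (hφ j s _ (LinearMap.mem_range_self _ x))).symm
  · intro t _ hts
    exact (E j).proj_eq_zero s t (Ne.symm hts) _ (hφ j t _ (LinearMap.mem_range_self _ x))
  · intro h
    exact absurd (Finset.mem_univ s) h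

end UDA

/-- Theorem 1: the category of `n`-generated `(S,⋆)`-decomposition algebras over `F`
equipped with `m` decompositions has a universal object. -/
theorem universal_decomposition_algebra (F : Type) [Field F] (hchar : ringChar F ≠ 2)
    (S : Type) [Fintype S] (star : S → S → Set S) (n m : ℕ) (hn : 0 < n) (hm : 0 < m) :
    ∃ (U : CommNAAlg F) (D : Fin m → Decomposition F U.carrier S star)
      (u : Fin n → U.carrier),
      GensDecompAlg D (Set.range u) ∧
      ∀ (N : CommNAAlg F) (E : Fin m → Decomposition F N.carrier S star)
        (y : Fin n → N.carrier), GensDecompAlg E (Set.range y) →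
        (∃! φ : U.carrier →ₙₐ[F] N.carrier,
            (∀ i, φ (u i) = y i) ∧
            ∀ j s, ∀ x ∈ (D j).comp s, φ x ∈ (E j).comp s) ∧
        ∀ φ : U.carrier →ₙₐ[F] N.carrier,
          ((∀ i, φ (u i) = y i) ∧
            ∀ j s, ∀ x ∈ (D j).comp s, φ x ∈ (E j).comp s) →
          Function.Surjective φ := by
  classical
  refine ⟨UDA.Ubundled F S star n m, UDA.DU F S star n m, UDA.uU F S star n m,
    UDA.gensU F S star n m, ?_⟩
  intro N E y hgen
  have hφ0gen : ∀ i, UDA.φ0 F S star n m N E y (UDA.uU F S star n m i) = y i := by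
    intro i
    rw [UDA.φ0_apply, UDA.uU, UDA.evU_mk, UDA.ev_single, UDA.evalT, one_smul]
  have hφ0comp : ∀ j s, ∀ x ∈ (UDA.DU F S star n m j).comp s,
      UDA.φ0 F S star n m N E y x ∈ (E j).comp s := by
    intro j s x hx
    obtain ⟨z, rfl⟩ := hx
    obtain ⟨a, rfl⟩ := UDA.mk_surjective F S star n m z
    rw [UDA.φ0_apply, UDA.Qr_mk, UDA.evU_mk, UDA.ev_Pr]
    exact (E j).proj_mem s _
  constructor
  · refine ⟨UDA.φ0 F S star n m N E y, ⟨hφ0gen, hφ0comp⟩, ?_⟩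
    intro ψ hψ
    ext x
    have := UDA.gensU F S star n m
      (NonUnitalAlgHom.equalizer ψ (UDA.φ0 F S star n m N E y))
      (by rintro _ ⟨i, rfl⟩
          exact (hψ.1 i).trans (hφ0gen i).symm)
      (by intro j s z hz
          change ψ z = UDA.φ0 F S star n m N E y z at hz
          change ψ ((UDA.DU F S star n m j).proj s z) = UDA.φ0 F S star n m N E y ((UDA.DU F S star n m j).proj s z)
          calc ψ ((UDA.DU F S star n m j).proj s z)
              = (E j).proj s (ψ z) := UDA.proj_comm F S star n m N E ψ hψ.2 j s z
            _ = (E j).proj s (UDA.φ0 F S star n m N E y z) := congrArg _ hz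
            _ = UDA.φ0 F S star n m N E y ((UDA.DU F S star n m j).proj s z) :=
                (UDA.proj_comm F S star n m N E _ hφ0comp j s z).symm) x
    exact this
  · intro φ hφ
    intro b
    have := hgen (NonUnitalAlgHom.range φ)
      (by rintro _ ⟨i, rfl⟩
          exact ⟨UDA.uU F S star n m i, hφ.1 i⟩)
      (by rintro j s _ ⟨a, rfl⟩
          exact ⟨UDA.Qr F S star n m j s a,
            UDA.proj_comm F S star n m N E φ hφ.2 j s a⟩) b
    exact this
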